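/- For the regular pentagon inscribed in the unit circle, the value x = (2√(10−2√5) + 5 − √5)/(2√(10−2√5) + 5 + √5) ∈ (0,1) satisfies ‖V_2 − (x,0)‖ = (1 − x) + e_5, where V_2 = (cos(4π/5), sin(4π/5)) and e_5 = 2·sin(π/5). -/

import Mathlib

noncomputable def pt (x y : ℝ) : EuclideanSpace ℝ (Fin 2) := WithLp.toLp 2 ![x, y]

/-- For the regular pentagon inscribed in the unit circle, the value
`x = (2√(10−2√5) + 5 − √5)/(2√(10−2√5) + 5 + √5)` lies in `(0,1)` and satisfies
`‖V₂ − (x,0)‖ = (1 − x) + e₅`, where `V₂ = (cos(4π/5), sin(4π/5))` and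
`e₅ = 2 sin(π/5)`. -/
theorem pentagon_three_servants :
    let x : ℝ := (2 * Real.sqrt (10 - 2 * Real.sqrt 5) + 5 - Real.sqrt 5) /
      (2 * Real.sqrt (10 - 2 * Real.sqrt 5) + 5 + Real.sqrt 5)
    let V₂ := pt (Real.cos (4 * Real.pi / 5)) (Real.sin (4 * Real.pi / 5))
    x ∈ Set.Ioo (0 : ℝ) 1 ∧
    dist V₂ (pt x 0) = (1 - x) + 2 * Real.sin (Real.pi / 5) := by
  intro x V₂
  set r : ℝ := Real.sqrt 5 with hr_def
  set s : ℝ := Real.sqrt (10 - 2 * Real.sqrt 5) with hs_def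
  have hr2 : r ^ 2 = 5 := Real.sq_sqrt (by norm_num)
  have hr_pos : (0:ℝ) < r := Real.sqrt_pos.mpr (by norm_num)
  have hr_lt : r < 3 := by
    nlinarith [hr2, hr_pos]
  have hs2 : s ^ 2 = 10 - 2 * r := Real.sq_sqrt (by nlinarith)
  have hs_pos : (0:ℝ) < s := Real.sqrt_pos.mpr (by nlinarith)
  have hden_pos : (0:ℝ) < 2 * s + 5 + r := by nlinarith
  have hx_def : x = (2 * s + 5 - r) / (2 * s + 5 + r) := rfl
  have hx0 : 0 < x := by
    rw [hx_def]
    apply div_pos (by nlinarith) hden_pos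
  have hx1 : x < 1 := by
    rw [hx_def, div_lt_one hden_pos]
    nlinarith
  refine ⟨⟨hx0, hx1⟩, ?_⟩
  -- trig values
  have hcos : Real.cos (4 * Real.pi / 5) = -((1 + r) / 4) := by
    have h : (4 : ℝ) * Real.pi / 5 = Real.pi - Real.pi / 5 := by ring
    rw [h, Real.cos_pi_sub, Real.cos_pi_div_five]
  have hsin5 : Real.sin (Real.pi / 5) = s / 4 := by
    have h1 : Real.sin (Real.pi / 5) ^ 2 = (s / 4) ^ 2 := by
      have := Real.sin_sq_add_cos_sq (Real.pi / 5)
      rw [Real.cos_pi_div_five] at this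
      nlinarith [this, hr2, hs2]
    have h2 : 0 ≤ Real.sin (Real.pi / 5) := by
      apply Real.sin_nonneg_of_nonneg_of_le_pi
      · positivity
      · nlinarith [Real.pi_pos]
    nlinarith [h1, h2, hs_pos]
  have hsin : Real.sin (4 * Real.pi / 5) = s / 4 := by
    have h : (4 : ℝ) * Real.pi / 5 = Real.pi - Real.pi / 5 := by ring
    rw [h, Real.sin_pi_sub, hsin5]
  have hx_eq : x * (2 * s + 5 + r) = 2 * s + 5 - r := by
    rw [hx_def]; field_simp
  -- distance
  have hdist : dist V₂ (pt x 0)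
      = Real.sqrt ((Real.cos (4 * Real.pi / 5) - x) ^ 2 + (Real.sin (4 * Real.pi / 5) - 0) ^ 2) := by
    simp [V₂, pt, EuclideanSpace.dist_eq, Fin.sum_univ_two, Real.dist_eq, sq_abs]
  rw [hdist, hcos, hsin, hsin5]
  have hrad : (-((1 + r) / 4) - x) ^ 2 + (s / 4 - 0) ^ 2 = ((1 - x) + 2 * (s / 4)) ^ 2 := by
    linear_combination (1/2) * hx_eq + (-3/16 : ℝ) * hs2 + (1/16 : ℝ) * hr2
  rw [hrad, Real.sqrt_sq (by nlinarith)]
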